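/- (Invariance reduction to standard form) For every horizon m ≥ 0, every μ ∈ ℝ, every n > 0 and every λ ∈ ℝ, the Gaussian one-armed-bandit value function satisfies V_m(μ, n, γ, τ, λ) = τ^{−1/2} · V_m(0, n/τ, γ, 1, √τ·(λ − μ)). Hence only value-function calculations with posterior mean 0 and observation precision 1 are needed. -/

import Mathlib

open MeasureTheory ProbabilityTheory

/-- Finite-horizon value function of the Gaussian one-armed bandit:
`V γ τ m μ n λ`, with discount `γ`, observation precision `τ`, horizon `m`,
posterior state `(μ, n)` and safe-arm reward `λ`. The expectation over the
next observation is taken under the Gaussian predictive distribution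
`𝒩(μ, 1/n + 1/τ)`. -/
noncomputable def V (γ τ : ℝ) : ℕ → ℝ → ℝ → ℝ → ℝ
  | 0, μ, _n, lam => max (μ - lam) 0 / (1 - γ)
  | m + 1, μ, n, lam =>
      max (μ - lam + γ * ∫ y, V γ τ m ((n * μ + τ * y) / (n + τ)) (n + τ) lam
        ∂(gaussianReal μ (1 / n + 1 / τ).toNNReal)) 0

lemma gaussian_integral_affine (f : ℝ → ℝ) (μ : ℝ) (v : NNReal) (c d : ℝ) (hc : c ≠ 0) :
    ∫ y, f (c * y + d) ∂(gaussianReal μ v)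
      = ∫ z, f z ∂(gaussianReal (c * μ + d) (⟨c ^ 2, sq_nonneg c⟩ * v)) := by
  let e : ℝ ≃ᵐ ℝ :=
    ((Homeomorph.mulLeft₀ c hc).trans (Homeomorph.addRight d)).toMeasurableEquiv
  have hcoe : ⇑e = fun y => c * y + d := rfl
  have hmap : (gaussianReal μ v).map e = gaussianReal (c * μ + d) (⟨c ^ 2, sq_nonneg c⟩ * v) := by
    rw [hcoe]
    have : (fun y => c * y + d) = (· + d) ∘ (c * ·) := rfl
    rw [this, ← Measure.map_map (measurable_add_const d) (measurable_const_mul c),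
      gaussianReal_map_const_mul c, gaussianReal_map_add_const d]
    rfl
  rw [← hmap, MeasureTheory.integral_map_equiv e f, hcoe]

lemma key (γ : ℝ) : ∀ m : ℕ, ∀ τ : ℝ, 0 < τ → ∀ μ n lam : ℝ, 0 < n →
    V γ τ m μ n lam = (Real.sqrt τ)⁻¹ * V γ 1 m 0 (n / τ) (Real.sqrt τ * (lam - μ)) := by
  intro m
  induction m with
  | zero =>
    intro τ hτ μ n lam hn
    have hs : 0 < Real.sqrt τ := Real.sqrt_pos.mpr hτ
    simp only [V]
    have h0 : (0 : ℝ) - Real.sqrt τ * (lam - μ) = Real.sqrt τ * (μ - lam) := by ring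
    have hmax : Real.sqrt τ * ((μ - lam) ⊔ 0) = Real.sqrt τ * (μ - lam) ⊔ 0 := by
      rw [mul_max_of_nonneg _ _ hs.le, mul_zero]
    rw [h0, ← hmax, ← mul_div_assoc, inv_mul_cancel_left₀ hs.ne']
  | succ m ih =>
    intro τ hτ μ n lam hn
    have hs : 0 < Real.sqrt τ := Real.sqrt_pos.mpr hτ
    have hs2 : Real.sqrt τ ^ 2 = τ := Real.sq_sqrt hτ.le
    have hnt : 0 < n + τ := by linarith
    have hnτ1 : 0 < n / τ + 1 := by positivity
    set s := Real.sqrt τ with hsdef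
    simp only [V]
    set f : ℝ → ℝ := fun a => V γ 1 m 0 ((n + τ) / τ) a with hf
    have hL : (fun y => V γ τ m ((n * μ + τ * y) / (n + τ)) (n + τ) lam)
        = fun y => s⁻¹ * f (-(s * τ / (n + τ)) * y + (s * lam - s * (n * μ) / (n + τ))) := by
      funext y
      rw [ih τ hτ _ _ _ hnt, hf]
      congr 2
      ring
    have hR : (fun z => V γ 1 m ((n / τ * 0 + 1 * z) / (n / τ + 1)) (n / τ + 1) (s * (lam - μ)))
        = fun z => f (-(1 / (n / τ + 1)) * z + s * (lam - μ)) := by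
      funext z
      rw [ih 1 one_pos _ _ _ hnτ1, Real.sqrt_one, inv_one, one_mul, one_mul]
      have h1 : (n / τ + 1) / 1 = (n + τ) / τ := by
        rw [div_one]; field_simp
      have h2 : s * (lam - μ) - (n / τ * 0 + 1 * z) / (n / τ + 1)
          = -(1 / (n / τ + 1)) * z + s * (lam - μ) := by ring
      rw [h1, h2, hf]
    have hc1 : -(s * τ / (n + τ)) ≠ 0 := by
      apply neg_ne_zero.mpr; positivity
    have hc2 : -(1 / (n / τ + 1)) ≠ 0 := by
      apply neg_ne_zero.mpr; positivity
    have hA := gaussian_integral_affine f μ (1 / n + 1 / τ).toNNReal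
      (-(s * τ / (n + τ))) (s * lam - s * (n * μ) / (n + τ)) hc1
    have hB := gaussian_integral_affine f 0 (1 / (n / τ) + 1 / 1).toNNReal
      (-(1 / (n / τ + 1))) (s * (lam - μ)) hc2
    have hmean : -(s * τ / (n + τ)) * μ + (s * lam - s * (n * μ) / (n + τ))
        = -(1 / (n / τ + 1)) * 0 + s * (lam - μ) := by
      field_simp
      ring
    have hvreal : (-(s * τ / (n + τ))) ^ 2 * (1 / n + 1 / τ)
        = (-(1 / (n / τ + 1))) ^ 2 * (1 / (n / τ) + 1 / 1) := by
      rw [← hs2]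
      field_simp
    have hvar : (⟨(-(s * τ / (n + τ))) ^ 2, sq_nonneg _⟩ * (1 / n + 1 / τ).toNNReal : NNReal)
        = ⟨(-(1 / (n / τ + 1))) ^ 2, sq_nonneg _⟩ * (1 / (n / τ) + 1 / 1).toNNReal := by
      rw [← NNReal.coe_inj]
      change (-(s * τ / (n + τ))) ^ 2 * ((1 / n + 1 / τ).toNNReal : ℝ)
        = (-(1 / (n / τ + 1))) ^ 2 * ((1 / (n / τ) + 1 / 1).toNNReal : ℝ)
      simp only [NNReal.coe_mul, NNReal.coe_mk,
        Real.coe_toNNReal _ (by positivity : (0:ℝ) ≤ 1 / n + 1 / τ),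
        Real.coe_toNNReal _ (by positivity : (0:ℝ) ≤ 1 / (n / τ) + 1 / 1)]
      exact hvreal
    rw [hL, hR, integral_const_mul, hA, hB, ← hmean, ← hvar,
      mul_max_of_nonneg _ _ (inv_nonneg.mpr hs.le), mul_zero]
    congr 1
    field_simp
    ring


/-- Invariance reduction to standard form:
`V_m(μ, n, γ, τ, λ) = τ^{−1/2} · V_m(0, n/τ, γ, 1, √τ·(λ − μ))`, so only
calculations with posterior mean `0` and observation precision `1` are
needed. -/
theorem nmab_standard_form_reduction (γ τ : ℝ)
    (hγ0 : 0 ≤ γ) (hγ1 : γ < 1) (hτ : 0 < τ) :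
    ∀ m : ℕ, ∀ μ n lam : ℝ, 0 < n →
      V γ τ m μ n lam =
        (Real.sqrt τ)⁻¹ * V γ 1 m 0 (n / τ) (Real.sqrt τ * (lam - μ)) := by
  intro m μ n lam hn
  exact key γ m τ hτ μ n lam hn
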